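/- Let L be a levellised n-lattice with dep(n−1) = k, and let A and B be antichains in L. Suppose for some level ℓ: the binary weights of A ∩ lev_d(L) and B ∩ lev_d(L) agree for all d with k ≥ d > ℓ (in the notation of the paper, for d = k,…,ℓ+1), and wt(A ∩ lev_ℓ(L)) < wt(B ∩ lev_ℓ(L)). Then the same holds with A, B replaced by their up-sets ↑A, ↑B: wt((↑A) ∩ lev_d(L)) = wt((↑B) ∩ lev_d(L)) for those d, and wt((↑A) ∩ lev_ℓ(L)) < wt((↑B) ∩ lev_ℓ(L)); and conversely. -/

import Mathlib

namespace PaperLattice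

variable {N : ℕ}

/-- Depth: one less than the maximum length of a chain from `t` down to `a` w.r.t. `le`. -/
noncomputable def dep (le : Fin N → Fin N → Prop) (t a : Fin N) : ℕ :=
  sSup {k | ∃ l : List (Fin N), List.Chain' (fun x y => le y x ∧ y ≠ x) l ∧
    l.head? = some t ∧ l.getLast? = some a ∧ l.length = k + 1}

/-- The `d`-th level: elements of depth `d`. -/
noncomputable def lev (le : Fin N → Fin N → Prop) (t : Fin N) (d : ℕ) : Set (Fin N) :=
  {a | dep le t a = d}

/-- A labelled poset is levellised if depth is monotone in the nonzero labels. -/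
def Levellised (le : Fin N → Fin N → Prop) (t : Fin N) : Prop :=
  ∀ i j : Fin N, 0 < (i : ℕ) → (i : ℕ) ≤ (j : ℕ) → dep le t i ≤ dep le t j

def lt' (le : Fin N → Fin N → Prop) (a b : Fin N) : Prop := le a b ∧ a ≠ b

/-- `b` covers `a`. -/
def CovByRel (le : Fin N → Fin N → Prop) (a b : Fin N) : Prop :=
  lt' le a b ∧ ∀ x, lt' le a x → lt' le x b → False

/-- The covering set of `a`. -/
def cov (le : Fin N → Fin N → Prop) (a : Fin N) : Set (Fin N) := {b | CovByRel le a b}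

/-- The up-set of `A`. -/
def upset (le : Fin N → Fin N → Prop) (A : Set (Fin N)) : Set (Fin N) :=
  {x | ∃ a ∈ A, le a x}

def AntichainRel (le : Fin N → Fin N → Prop) (A : Set (Fin N)) : Prop :=
  ∀ a ∈ A, ∀ b ∈ A, a ≠ b → ¬ le a b

/-- Binary weight of a set of labels. -/
noncomputable def wt (A : Set (Fin N)) : ℕ :=
  ∑ j : Fin N, A.indicator (fun j => 2 ^ (j : ℕ)) j

/-- `z` is a bottom and `o` a top for `le`. -/
def Bounds (le : Fin N → Fin N → Prop) (z o : Fin N) : Prop :=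
  (∀ a, le z a) ∧ (∀ a, le a o)

/-- The order obtained from `le` by adding `m` new atoms, the `i`-th having covering set `A i`. -/
def extLe {n m : ℕ} (le : Fin n → Fin n → Prop) (A : Fin m → Set (Fin n)) :
    Fin (n + m) → Fin (n + m) → Prop := fun x y =>
  if hx : (x : ℕ) < n then
    if hy : (y : ℕ) < n then le ⟨x, hx⟩ ⟨y, hy⟩
    else (x : ℕ) = 0
  else
    if hy : (y : ℕ) < n then
      (⟨y, hy⟩ : Fin n) ∈ upset le (A ⟨(x : ℕ) - n, by have := x.isLt; omega⟩)
    else x = y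

/-- The relabelled order `π(L)`. -/
def permLe {n : ℕ} (π : Equiv.Perm (Fin n)) (le : Fin n → Fin n → Prop) :
    Fin n → Fin n → Prop := fun a b => le (π.symm a) (π.symm b)


section Aux

variable {n : ℕ} {le : Fin n → Fin n → Prop} {t : Fin n}

def depSet (le : Fin n → Fin n → Prop) (t a : Fin n) : Set ℕ :=
  {k | ∃ l : List (Fin n), List.Chain' (fun x y => le y x ∧ y ≠ x) l ∧
    l.head? = some t ∧ l.getLast? = some a ∧ l.length = k + 1}

lemma dep_def (a : Fin n) : dep le t a = sSup (depSet le t a) := rfl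

lemma depSet_bddAbove (htrans : ∀ a b c : Fin n, le a b → le b c → le a c)
    (hanti : ∀ a b : Fin n, le a b → le b a → a = b) (a : Fin n) :
    BddAbove (depSet le t a) := by
  refine ⟨n, fun k hk => ?_⟩
  obtain ⟨l, hc, -, -, hlen⟩ := hk
  haveI : IsTrans (Fin n) (fun x y => le y x ∧ y ≠ x) := ⟨by
    rintro x y z ⟨h1, h2⟩ ⟨h3, h4⟩
    refine ⟨htrans _ _ _ h3 h1, fun hzx => ?_⟩
    subst hzx
    exact h4 (hanti _ _ h3 h1)⟩
  have hp := List.isChain_iff_pairwise.mp hc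
  have hnd : l.Nodup := hp.imp (fun h => Ne.symm h.2)
  have := hnd.length_le_card
  simp [Fintype.card_fin] at this
  omega

lemma depSet_nonempty (htop : ∀ a, le a t) (a : Fin n) : (depSet le t a).Nonempty := by
  by_cases h : a = t
  · exact ⟨0, [t], List.isChain_singleton t, rfl, by simp [h], rfl⟩
  · exact ⟨1, [t, a], List.isChain_pair.mpr ⟨htop a, h⟩, rfl, rfl, rfl⟩

lemma dep_lt_of_lt (htrans : ∀ a b c : Fin n, le a b → le b c → le a c)
    (hanti : ∀ a b : Fin n, le a b → le b a → a = b)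
    (htop : ∀ a, le a t) {a x : Fin n} (hax : le a x) (hne : a ≠ x) :
    dep le t x < dep le t a := by
  have hmem : sSup (depSet le t x) ∈ depSet le t x :=
    Nat.sSup_mem (depSet_nonempty htop x) (depSet_bddAbove htrans hanti x)
  obtain ⟨l, hc, hh, hl, hlen⟩ := hmem
  have hmem2 : dep le t x + 1 ∈ depSet le t a := by
    refine ⟨l ++ [a], ?_, ?_, ?_, ?_⟩
    · rw [List.Chain', List.isChain_append]
      refine ⟨hc, List.isChain_singleton a, ?_⟩
      intro p hp q hq
      simp only [List.head?_cons, Option.mem_some_iff] at hq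
      rw [hl] at hp
      simp only [Option.mem_some_iff] at hp
      subst hp; subst hq
      exact ⟨hax, hne⟩
    · cases l with
      | nil => simp at hh
      | cons hd tl => simpa using hh
    · exact List.getLast?_concat (l := l)
    · simp only [List.length_append, List.length_singleton]
      rw [dep_def]; omega
  exact le_csSup (depSet_bddAbove htrans hanti a) hmem2

lemma wt_injective : Function.Injective (wt : Set (Fin n) → ℕ) := by
  classical
  intro S T h
  have key : ∀ U : Set (Fin n),
      wt U = ∑ i ∈ (Finset.univ.filter (· ∈ U)).image Fin.val, 2 ^ i := by
    intro U
    rw [Finset.sum_image (fun x _ y _ h => Fin.val_injective h)]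
    rw [wt, ← Finset.sum_filter_of_ne (p := (· ∈ U))]
    · exact Finset.sum_congr rfl (fun j hj => by
        simp only [Finset.mem_filter] at hj
        simp [Set.indicator_of_mem hj.2])
    · intro j _ hj
      by_contra hmem
      exact hj (by simp [Set.indicator_of_notMem hmem])
  rw [key S, key T] at h
  have himg := Finset.geomSum_injective (le_refl 2) h
  have hfil := Finset.image_injective Fin.val_injective himg
  ext j
  constructor <;> intro hj
  · have : j ∈ Finset.univ.filter (· ∈ S) := by simp [hj]
    rw [hfil] at this; simpa using this
  · have : j ∈ Finset.univ.filter (· ∈ T) := by simp [hj]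
    rw [← hfil] at this; simpa using this

lemma wt_union_disjoint {S T : Set (Fin n)} (h : Disjoint S T) :
    wt (S ∪ T) = wt S + wt T := by
  unfold wt
  rw [Set.indicator_union_of_disjoint h]
  exact Finset.sum_add_distrib

def Dset (le : Fin n → Fin n → Prop) (t : Fin n) (A : Set (Fin n)) (d : ℕ) : Set (Fin n) :=
  {x | dep le t x = d ∧ ∃ a ∈ A, le a x ∧ a ≠ x}

lemma upset_inter_lev (hrefl : ∀ a, le a a) {A : Set (Fin n)} (d : ℕ) :
    upset le A ∩ lev le t d = (A ∩ lev le t d) ∪ Dset le t A d := by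
  ext x
  constructor
  · rintro ⟨⟨a, haA, hax⟩, hxd⟩
    by_cases h : a = x
    · exact Or.inl ⟨h ▸ haA, hxd⟩
    · exact Or.inr ⟨hxd, a, haA, hax, h⟩
  · rintro (⟨hxA, hxd⟩ | ⟨hxd, a, haA, hax, hne⟩)
    · exact ⟨⟨x, hxA, hrefl x⟩, hxd⟩
    · exact ⟨⟨a, haA, hax⟩, hxd⟩

lemma disjoint_lev_Dset {A : Set (Fin n)} (hA : AntichainRel le A) (d : ℕ) :
    Disjoint (A ∩ lev le t d) (Dset le t A d) := by
  rw [Set.disjoint_left]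
  rintro x ⟨hxA, hxd⟩ ⟨-, a, haA, hax, hne⟩
  exact hA a haA x hxA hne hax

lemma recov (hrefl : ∀ a, le a a) {A : Set (Fin n)} (hA : AntichainRel le A) (d : ℕ) :
    A ∩ lev le t d = (upset le A ∩ lev le t d) \ Dset le t A d := by
  rw [upset_inter_lev hrefl, Set.union_diff_right,
    (disjoint_lev_Dset hA d).sdiff_eq_left]

end Aux

/-- the level-by-level lexicographic comparison of weights of two antichains
agrees with that of their up-sets. -/
theorem statement13 {n : ℕ} (hn : 2 ≤ n) (L : Lattice (Fin n))
    (hb : Bounds L.le ⟨0, by omega⟩ ⟨1, by omega⟩)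
    (hlev : Levellised L.le ⟨1, by omega⟩)
    (k : ℕ) (hk : dep L.le ⟨1, by omega⟩ ⟨n - 1, by omega⟩ = k)
    (A B : Set (Fin n))
    (hA : AntichainRel L.le A) (hA0 : ∀ a ∈ A, a ≠ ⟨0, by omega⟩)
    (hB : AntichainRel L.le B) (hB0 : ∀ a ∈ B, a ≠ ⟨0, by omega⟩)
    (ℓ : ℕ) (hℓ1 : 1 ≤ ℓ) (hℓk : ℓ ≤ k) :
    ((∀ d : ℕ, ℓ < d → d ≤ k →
        wt (A ∩ lev L.le ⟨1, by omega⟩ d) = wt (B ∩ lev L.le ⟨1, by omega⟩ d)) ∧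
      wt (A ∩ lev L.le ⟨1, by omega⟩ ℓ) < wt (B ∩ lev L.le ⟨1, by omega⟩ ℓ)) ↔
    ((∀ d : ℕ, ℓ < d → d ≤ k →
        wt (upset L.le A ∩ lev L.le ⟨1, by omega⟩ d) =
          wt (upset L.le B ∩ lev L.le ⟨1, by omega⟩ d)) ∧
      wt (upset L.le A ∩ lev L.le ⟨1, by omega⟩ ℓ) <
        wt (upset L.le B ∩ lev L.le ⟨1, by omega⟩ ℓ)) := by
  have hrefl : ∀ a : Fin n, L.le a a :=
    fun a => L.toSemilatticeSup.toPartialOrder.toPreorder.le_refl a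
  have htrans : ∀ a b c : Fin n, L.le a b → L.le b c → L.le a c :=
    fun a b c h1 h2 => L.toSemilatticeSup.toPartialOrder.toPreorder.le_trans a b c h1 h2
  have hanti : ∀ a b : Fin n, L.le a b → L.le b a → a = b :=
    fun a b h1 h2 => L.toSemilatticeSup.toPartialOrder.le_antisymm a b h1 h2
  have htop : ∀ a : Fin n, L.le a ⟨1, by omega⟩ := hb.2
  have hdk : ∀ a : Fin n, a ≠ ⟨0, by omega⟩ → dep L.le ⟨1, by omega⟩ a ≤ k := by
    intro a ha
    rw [← hk]
    refine hlev a ⟨n - 1, by omega⟩ ?_ ?_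
    · rcases Nat.eq_zero_or_pos (a : ℕ) with h | h
      · exact absurd (Fin.ext h) ha
      · exact h
    · have := a.isLt; simp; omega
  -- D-set comparison lemma
  have hDsub : ∀ (A' B' : Set (Fin n)), (∀ a ∈ A', a ≠ ⟨0, by omega⟩) → ∀ d : ℕ,
      (∀ d', d < d' → d' ≤ k →
        A' ∩ lev L.le ⟨1, by omega⟩ d' = B' ∩ lev L.le ⟨1, by omega⟩ d') →
      Dset L.le ⟨1, by omega⟩ A' d ⊆ Dset L.le ⟨1, by omega⟩ B' d := by
    rintro A' B' hA'0 d heq x ⟨hxd, a, haA, hax, hne⟩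
    have hlt : dep L.le ⟨1, by omega⟩ x < dep L.le ⟨1, by omega⟩ a :=
      dep_lt_of_lt htrans hanti htop hax hne
    rw [hxd] at hlt
    have hak : dep L.le ⟨1, by omega⟩ a ≤ k := hdk a (hA'0 a haA)
    have haB : a ∈ B' ∩ lev L.le ⟨1, by omega⟩ (dep L.le ⟨1, by omega⟩ a) := by
      rw [← heq _ hlt hak]
      exact ⟨haA, rfl⟩
    exact ⟨hxd, a, haB.1, hax, hne⟩
  -- central equivalence of set equalities
  have hEqIff :
      (∀ d : ℕ, ℓ < d → d ≤ k →
        A ∩ lev L.le ⟨1, by omega⟩ d = B ∩ lev L.le ⟨1, by omega⟩ d) ↔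
      (∀ d : ℕ, ℓ < d → d ≤ k →
        upset L.le A ∩ lev L.le ⟨1, by omega⟩ d =
          upset L.le B ∩ lev L.le ⟨1, by omega⟩ d) := by
    constructor
    · intro h d hd1 hd2
      have hD : Dset L.le ⟨1, by omega⟩ A d = Dset L.le ⟨1, by omega⟩ B d :=
        subset_antisymm
          (hDsub A B hA0 d (fun d' h1 h2 => h d' (lt_trans hd1 h1) h2))
          (hDsub B A hB0 d (fun d' h1 h2 => (h d' (lt_trans hd1 h1) h2).symm))
      rw [upset_inter_lev hrefl, upset_inter_lev hrefl, h d hd1 hd2, hD]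
    · intro h
      have key : ∀ m : ℕ, ∀ d : ℕ, ℓ < d → d ≤ k → k - d = m →
          A ∩ lev L.le ⟨1, by omega⟩ d = B ∩ lev L.le ⟨1, by omega⟩ d := by
        intro m
        induction m using Nat.strong_induction_on with
        | _ m IH =>
          intro d hd1 hd2 hd3
          have hD : Dset L.le ⟨1, by omega⟩ A d = Dset L.le ⟨1, by omega⟩ B d :=
            subset_antisymm
              (hDsub A B hA0 d (fun d' h1 h2 =>
                IH (k - d') (by omega) d' (by omega) h2 rfl))
              (hDsub B A hB0 d (fun d' h1 h2 =>
                (IH (k - d') (by omega) d' (by omega) h2 rfl).symm))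
          rw [recov hrefl hA d, recov hrefl hB d, h d hd1 hd2, hD]
      exact fun d h1 h2 => key (k - d) d h1 h2 rfl
  have hDl : (∀ d : ℕ, ℓ < d → d ≤ k →
        A ∩ lev L.le ⟨1, by omega⟩ d = B ∩ lev L.le ⟨1, by omega⟩ d) →
      Dset L.le ⟨1, by omega⟩ A ℓ = Dset L.le ⟨1, by omega⟩ B ℓ := fun h =>
    subset_antisymm
      (hDsub A B hA0 ℓ h)
      (hDsub B A hB0 ℓ (fun d' h1 h2 => (h d' h1 h2).symm))
  constructor
  · rintro ⟨h1, h2⟩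
    have hsetEq : ∀ d : ℕ, ℓ < d → d ≤ k →
        A ∩ lev L.le ⟨1, by omega⟩ d = B ∩ lev L.le ⟨1, by omega⟩ d :=
      fun d a b => wt_injective (h1 d a b)
    have hup := hEqIff.mp hsetEq
    refine ⟨fun d a b => by rw [hup d a b], ?_⟩
    rw [upset_inter_lev hrefl (A := A), upset_inter_lev hrefl (A := B),
      wt_union_disjoint (disjoint_lev_Dset hA ℓ),
      wt_union_disjoint (disjoint_lev_Dset hB ℓ), hDl hsetEq]
    exact Nat.add_lt_add_right h2 _
  · rintro ⟨h1, h2⟩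
    have hupEq : ∀ d : ℕ, ℓ < d → d ≤ k →
        upset L.le A ∩ lev L.le ⟨1, by omega⟩ d =
          upset L.le B ∩ lev L.le ⟨1, by omega⟩ d :=
      fun d a b => wt_injective (h1 d a b)
    have hsetEq := hEqIff.mpr hupEq
    refine ⟨fun d a b => congrArg wt (hsetEq d a b), ?_⟩
    rw [upset_inter_lev hrefl (A := A), upset_inter_lev hrefl (A := B),
      wt_union_disjoint (disjoint_lev_Dset hA ℓ),
      wt_union_disjoint (disjoint_lev_Dset hB ℓ), hDl hsetEq] at h2
    omega

end PaperLattice
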